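/- Let H be a complex Hilbert space, ι a countable index type, and ψ : ι → H a total Bessel sequence with bounded analysis operator C : H → ℓ²(ι), (C f)_k = ⟨ψ_k, f⟩, frame operator S = C*C with positive square root √S, and Gram operator G = C C* with positive square root √G. Then for every f ∈ H there exists a unique c in the closure of Ran(C) with √G c = C f, and for this c the family (c_k·ψ_k)_k sums in norm to √S f, i.e. √S f = ∑_k c_k ψ_k = C* c. In particular, since √S is injective, f is the unique vector h ∈ H with √S h = ∑_k c_k ψ_k (reconstruction of every f ∈ H from its altered analysis coefficients √G⁻¹ C f). -/

import Mathlib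

set_option maxHeartbeats 1000000
set_option synthInstance.maxHeartbeats 400000


open StarAlgebra in
lemma my_commute_of_mem_elemental {A : Type*} [CStarAlgebra A]
    {a b x : A} (hsa : IsSelfAdjoint a) (hab : Commute a b)
    (hx : x ∈ StarAlgebra.elemental ℂ a) : Commute x b := by
  induction hx using StarAlgebra.elemental.induction_on with
  | self => exact hab
  | star_self => rwa [hsa.star_eq]
  | algebraMap r => exact Algebra.commutes r b
  | add u hu v hv h1 h2 => exact h1.add_left h2
  | mul u hu v hv h1 h2 => exact h1.mul_left h2
  | closure s hs h v hv =>
      exact closure_minimal (fun u hu => h u hu)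
        (isClosed_eq (continuous_id.mul continuous_const)
          (continuous_const.mul continuous_id)) hv

lemma my_cfc_mem_elemental {A : Type*} [CStarAlgebra A] (a : A) (g : ℂ → ℂ) :
    cfc g a ∈ StarAlgebra.elemental ℂ a := by
  refine cfc_cases (fun x => x ∈ StarAlgebra.elemental ℂ a) a g (zero_mem _) ?_
  intro hg ha
  rw [cfcHom_eq_of_isStarNormal]
  exact SetLike.coe_mem _

lemma my_commute_sqrt {K : Type*} [NormedAddCommGroup K] [InnerProductSpace ℂ K]
    [CompleteSpace K] {a b : K →L[ℂ] K} (ha : 0 ≤ a) (hab : Commute a b) :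
    Commute (CFC.sqrt a) b := by
  have hsa : IsSelfAdjoint a := .of_nonneg ha
  rw [CFC.sqrt_eq_cfc, cfc_nnreal_eq_real _ a ha, cfc_real_eq_complex]
  exact my_commute_of_mem_elemental hsa hab (my_cfc_mem_elemental a _)

open ContinuousLinearMap in
lemma my_intertwine {H L : Type*} [NormedAddCommGroup H] [InnerProductSpace ℂ H] [CompleteSpace H]
    [NormedAddCommGroup L] [InnerProductSpace ℂ L] [CompleteSpace L]
    (C : H →L[ℂ] L)
    (sqrtS : H →L[ℂ] H) (hSpos : sqrtS.IsPositive)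
    (hSsq : sqrtS.comp sqrtS = (adjoint C).comp C)
    (sqrtG : L →L[ℂ] L) (hGpos : sqrtG.IsPositive)
    (hGsq : sqrtG.comp sqrtG = C.comp (adjoint C)) :
    ∀ h : H, sqrtG (C h) = C (sqrtS h) := by
  have hS' : ∀ h, sqrtS (sqrtS h) = adjoint C (C h) := fun h => by
    simpa using ContinuousLinearMap.ext_iff.mp hSsq h
  have hG' : ∀ c, sqrtG (sqrtG c) = C (adjoint C c) := fun c => by
    simpa using ContinuousLinearMap.ext_iff.mp hGsq c
  let e := WithLp.prodContinuousLinearEquiv 2 ℂ H L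
  let A : WithLp 2 (H × L) →L[ℂ] WithLp 2 (H × L) :=
    (e.symm : (H × L) →L[ℂ] WithLp 2 (H × L)) ∘L ((sqrtS.prodMap sqrtG) ∘L (e : WithLp 2 (H × L) →L[ℂ] (H × L)))
  let T : WithLp 2 (H × L) →L[ℂ] WithLp 2 (H × L) :=
    (e.symm : (H × L) →L[ℂ] WithLp 2 (H × L)) ∘L
      (((0 : (H × L) →L[ℂ] H).prod (C.comp (ContinuousLinearMap.fst ℂ H L))) ∘L (e : WithLp 2 (H × L) →L[ℂ] (H × L)))
  have hAf : ∀ x : WithLp 2 (H × L), (A x).fst = sqrtS x.fst := fun x => rfl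
  have hAs : ∀ x : WithLp 2 (H × L), (A x).snd = sqrtG x.snd := fun x => rfl
  have hTf : ∀ x : WithLp 2 (H × L), (T x).fst = 0 := fun x => rfl
  have hTs : ∀ x : WithLp 2 (H × L), (T x).snd = C x.fst := fun x => rfl
  have hKext : ∀ x y : WithLp 2 (H × L), x.fst = y.fst → x.snd = y.snd → x = y := by
    intro x y h1 h2
    exact e.injective (Prod.ext h1 h2)
  have hApos : A.IsPositive := by
    constructor
    · intro x y
      have hs := (ContinuousLinearMap.isSelfAdjoint_iff_isSymmetric.mp hSpos.isSelfAdjoint) x.fst y.fst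
      have hg := (ContinuousLinearMap.isSelfAdjoint_iff_isSymmetric.mp hGpos.isSelfAdjoint) x.snd y.snd
      simp only [ContinuousLinearMap.coe_coe] at hs hg
      simp only [ContinuousLinearMap.coe_coe, WithLp.prod_inner_apply, hAf, hAs]
      change inner ℂ (A x).fst y.fst + inner ℂ (A x).snd y.snd = inner ℂ x.fst (A y).fst + inner ℂ x.snd (A y).snd
      rw [hAf, hAf, hAs, hAs]
      rw [hs, hg]
    · intro x
      have h1 := hSpos.inner_nonneg_left x.fst
      have h2 := hGpos.inner_nonneg_left x.snd
      rw [ContinuousLinearMap.reApplyInnerSelf_apply]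
      simp only [WithLp.prod_inner_apply, hAf, hAs, map_add]
      change (0:ℝ) ≤ RCLike.re (inner ℂ (A x).fst x.fst) + RCLike.re (inner ℂ (A x).snd x.snd)
      rw [hAf, hAs]
      replace h1 := (RCLike.nonneg_iff.mp h1).1
      replace h2 := (RCLike.nonneg_iff.mp h2).1

      exact add_nonneg h1 h2
  have hA : (0 : WithLp 2 (H × L) →L[ℂ] WithLp 2 (H × L)) ≤ A := (ContinuousLinearMap.nonneg_iff_isPositive A).mpr hApos
  have hAA : (0 : WithLp 2 (H × L) →L[ℂ] WithLp 2 (H × L)) ≤ A * A := by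
    simpa [hApos.isSelfAdjoint.star_eq] using star_mul_self_nonneg A
  have hsqrt : CFC.sqrt (A * A) = A := CFC.sqrt_unique rfl hA
  have hcomm : Commute (A * A) T := by
    apply ContinuousLinearMap.ext
    intro x
    apply hKext
    · simp only [ContinuousLinearMap.mul_apply, hAf, hTf, map_zero]
    · simp only [ContinuousLinearMap.mul_apply, hAs, hTs, hAf]
      simp only [hG', hS']
  have hAT : Commute A T := by
    have := my_commute_sqrt hAA hcomm
    rwa [hsqrt] at this
  intro h
  have hx := ContinuousLinearMap.ext_iff.mp hAT ((e.symm : (H × L) →L[ℂ] WithLp 2 (H × L)) (h, 0))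
  have h2 := congrArg (fun z : WithLp 2 (H × L) => z.snd) hx
  have hfst : ((e.symm : (H × L) →L[ℂ] WithLp 2 (H × L)) (h, 0)).fst = h := rfl
  simpa only [ContinuousLinearMap.mul_apply, hAs, hTs, hAf, hfst] using h2
open scoped ComplexInnerProductSpace

/-- Let `ψ : ι → H` be a total Bessel sequence with analysis operator
`C`, frame operator `S = C*C` with positive square root `√S`, and Gram operator `G = C C*`
with positive square root `√G`.  Then for every `f ∈ H` there is a unique
`c ∈ cl(Ran C)` with `√G c = C f`, and for this `c` one has
`√S f = ∑ₖ cₖ ψₖ = C* c` (norm convergence); since `√S` is injective, `f` is the unique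
vector `h` with `√S h = C* c`. -/
theorem reconstruction_with_altered_coefficients
    {H : Type*} [NormedAddCommGroup H] [InnerProductSpace ℂ H] [CompleteSpace H]
    {ι : Type*} [Countable ι] (ψ : ι → H) (M : ℝ)
    (hbessel : ∀ f : H, Summable (fun k => ‖⟪ψ k, f⟫‖ ^ 2) ∧
      ∑' k, ‖⟪ψ k, f⟫‖ ^ 2 ≤ M * ‖f‖ ^ 2)
    (htotal : (Submodule.span ℂ (Set.range ψ)).topologicalClosure = ⊤)
    (C : H →L[ℂ] lp (fun _ : ι => ℂ) 2)
    (hC : ∀ (f : H) (k : ι), C f k = ⟪ψ k, f⟫)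
    (sqrtS : H →L[ℂ] H)
    (hSpos : sqrtS.IsPositive)
    (hSsq : sqrtS.comp sqrtS = (ContinuousLinearMap.adjoint C).comp C)
    (sqrtG : lp (fun _ : ι => ℂ) 2 →L[ℂ] lp (fun _ : ι => ℂ) 2)
    (hGpos : sqrtG.IsPositive)
    (hGsq : sqrtG.comp sqrtG = C.comp (ContinuousLinearMap.adjoint C)) :
    ∀ f : H,
      (∃! c : lp (fun _ : ι => ℂ) 2,
        c ∈ closure (Set.range ⇑C) ∧ sqrtG c = C f) ∧
      ∀ c : lp (fun _ : ι => ℂ) 2, c ∈ closure (Set.range ⇑C) → sqrtG c = C f →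
        HasSum (fun k => c k • ψ k) (sqrtS f) ∧
        (ContinuousLinearMap.adjoint C) c = sqrtS f ∧
        ∀ h : H, sqrtS h = (ContinuousLinearMap.adjoint C) c → h = f := by
  classical
  set Cs := ContinuousLinearMap.adjoint C with hCsdef
  have hinter : ∀ h, sqrtG (C h) = C (sqrtS h) :=
    my_intertwine C sqrtS hSpos hSsq sqrtG hGpos hGsq
  have hS' : ∀ h, sqrtS (sqrtS h) = Cs (C h) := fun h => by
    simpa using ContinuousLinearMap.ext_iff.mp hSsq h
  have hG' : ∀ c, sqrtG (sqrtG c) = C (Cs c) := fun c => by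
    simpa using ContinuousLinearMap.ext_iff.mp hGsq c
  have hSsym := ContinuousLinearMap.isSelfAdjoint_iff_isSymmetric.mp hSpos.isSelfAdjoint
  have hGsym := ContinuousLinearMap.isSelfAdjoint_iff_isSymmetric.mp hGpos.isSelfAdjoint
  -- norm identities
  have hCnorm : ∀ h : H, ‖C h‖ = ‖sqrtS h‖ := by
    intro h
    have h1 : ⟪C h, C h⟫ = ⟪sqrtS h, sqrtS h⟫ := by
      calc ⟪C h, C h⟫ = ⟪h, Cs (C h)⟫ := (ContinuousLinearMap.adjoint_inner_right C h (C h)).symm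
        _ = ⟪h, sqrtS (sqrtS h)⟫ := by rw [hS']
        _ = ⟪sqrtS h, sqrtS h⟫ := by
            have := hSsym h (sqrtS h)
            simp only [ContinuousLinearMap.coe_coe] at this
            exact this.symm
    have h2 : ‖C h‖ ^ 2 = ‖sqrtS h‖ ^ 2 := by
      rw [← inner_self_eq_norm_sq (𝕜 := ℂ), ← inner_self_eq_norm_sq (𝕜 := ℂ), h1]
    have h3 := congrArg Real.sqrt h2
    rwa [Real.sqrt_sq (norm_nonneg _), Real.sqrt_sq (norm_nonneg _)] at h3
  have hCsnorm : ∀ c, ‖Cs c‖ = ‖sqrtG c‖ := by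
    intro c
    have h1 : ⟪Cs c, Cs c⟫ = ⟪sqrtG c, sqrtG c⟫ := by
      calc ⟪Cs c, Cs c⟫ = ⟪c, C (Cs c)⟫ := (ContinuousLinearMap.adjoint_inner_right Cs c (Cs c)).symm.trans (by rw [ContinuousLinearMap.adjoint_adjoint])
        _ = ⟪c, sqrtG (sqrtG c)⟫ := by rw [hG']
        _ = ⟪sqrtG c, sqrtG c⟫ := by
            have := hGsym c (sqrtG c)
            simp only [ContinuousLinearMap.coe_coe] at this
            exact this.symm
    have h2 : ‖Cs c‖ ^ 2 = ‖sqrtG c‖ ^ 2 := by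
      rw [← inner_self_eq_norm_sq (𝕜 := ℂ), ← inner_self_eq_norm_sq (𝕜 := ℂ), h1]
    have h3 := congrArg Real.sqrt h2
    rwa [Real.sqrt_sq (norm_nonneg _), Real.sqrt_sq (norm_nonneg _)] at h3
  -- injectivity of C from totality
  have hCinj : ∀ h : H, C h = 0 → h = 0 := by
    intro h hh
    have hk : ∀ k, ⟪ψ k, h⟫ = 0 := by
      intro k
      rw [← hC h k, hh]
      simp
    have hsp : ∀ g ∈ Submodule.span ℂ (Set.range ψ), ⟪g, h⟫ = 0 := by
      intro g hg
      induction hg using Submodule.span_induction with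
      | mem u hu => obtain ⟨k, rfl⟩ := hu; exact hk k
      | zero => simp
      | add u v _ _ h1 h2 => rw [inner_add_left, h1, h2, add_zero]
      | smul a u _ h1 => rw [inner_smul_left, h1, mul_zero]
    have hcl : ∀ g ∈ closure ((Submodule.span ℂ (Set.range ψ) : Submodule ℂ H) : Set H),
        ⟪g, h⟫ = 0 := by
      intro g hg
      have hclosed : IsClosed {x : H | ⟪x, h⟫ = 0} :=
        isClosed_eq (Continuous.inner continuous_id continuous_const) continuous_const
      exact closure_minimal (fun u hu => hsp u hu) hclosed hg
    have hmem : h ∈ closure ((Submodule.span ℂ (Set.range ψ) : Submodule ℂ H) : Set H) := by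
      have := congrArg (fun (s : Submodule ℂ H) => (s : Set H)) htotal
      simp only [Submodule.topologicalClosure_coe, Submodule.top_coe] at this
      rw [this]; trivial
    exact inner_self_eq_zero.mp (hcl h hmem)
  have hSinj : ∀ h : H, sqrtS h = 0 → h = 0 := by
    intro h hh
    apply hCinj
    have := hCnorm h
    rw [hh, norm_zero, norm_eq_zero] at this
    exact this
  -- density of range of sqrtS
  have hSdense : Dense (Set.range ⇑sqrtS) := by
    have htop : (LinearMap.range (sqrtS : H →ₗ[ℂ] H)).topologicalClosure = ⊤ := by
      rw [Submodule.topologicalClosure_eq_top_iff]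
      rw [Submodule.eq_bot_iff]
      intro x hx
      have h1 := (Submodule.mem_orthogonal _ x).mp hx (sqrtS (sqrtS x)) ⟨sqrtS x, rfl⟩
      have h2 : ⟪sqrtS x, sqrtS x⟫ = 0 := by
        have := hSsym (sqrtS x) x
        simp only [ContinuousLinearMap.coe_coe] at this
        rw [this] at h1
        exact h1
      exact hSinj x (inner_self_eq_zero.mp h2)
    have := congrArg (fun (s : Submodule ℂ H) => (s : Set H)) htop
    simp only [Submodule.topologicalClosure_coe, Submodule.top_coe] at this
    rw [LinearMap.coe_range] at this
    rw [ContinuousLinearMap.coe_coe] at this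
    rw [dense_iff_closure_eq, this]
  -- adjoint of single
  have hsingle : ∀ (k : ι) (a : ℂ), Cs (lp.single 2 k a) = a • ψ k := by
    intro k a
    apply ext_inner_right ℂ
    intro g
    rw [hCsdef, ContinuousLinearMap.adjoint_inner_left]
    rw [lp.inner_eq_tsum]
    rw [tsum_eq_single k]
    · rw [lp.single_apply_self, inner_smul_left, hC]
      exact RCLike.inner_apply' _ _
    · intro j hj
      rw [lp.single_apply_ne (E := fun _ : ι => ℂ) 2 k a hj]
      simp
  intro f
  obtain ⟨u, hu_mem, hu_lim⟩ := mem_closure_iff_seq_limit.mp (hSdense f)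
  choose g hg using hu_mem
  have hglim : Filter.Tendsto (fun n => sqrtS (g n)) Filter.atTop (nhds f) := by
    simpa only [hg] using hu_lim
  have hcauchy : CauchySeq (fun n => C (g n)) := by
    have hc1 : CauchySeq (fun n => sqrtS (g n)) := hglim.cauchySeq
    rw [Metric.cauchySeq_iff] at hc1 ⊢
    intro ε hε
    obtain ⟨N, hN⟩ := hc1 ε hε
    refine ⟨N, fun m hm n hn => ?_⟩
    have hd := hN m hm n hn
    rw [dist_eq_norm, ← map_sub] at hd ⊢
    rwa [hCnorm (g m - g n)]
  obtain ⟨c₀, hc₀⟩ := cauchySeq_tendsto_of_complete hcauchy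
  have hc₀mem : c₀ ∈ closure (Set.range ⇑C) :=
    mem_closure_of_tendsto hc₀ (Filter.Eventually.of_forall fun n => ⟨g n, rfl⟩)
  have hGc₀ : sqrtG c₀ = C f := by
    have h1 : Filter.Tendsto (fun n => sqrtG (C (g n))) Filter.atTop (nhds (sqrtG c₀)) :=
      (sqrtG.continuous.tendsto c₀).comp hc₀
    have h2 : Filter.Tendsto (fun n => C (sqrtS (g n))) Filter.atTop (nhds (C f)) :=
      (C.continuous.tendsto f).comp hglim
    simp only [hinter] at h1
    exact tendsto_nhds_unique h1 h2
  have hCsc₀ : Cs c₀ = sqrtS f := by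
    have h1 : Filter.Tendsto (fun n => Cs (C (g n))) Filter.atTop (nhds (Cs c₀)) :=
      (Cs.continuous.tendsto c₀).comp hc₀
    have h2 : Filter.Tendsto (fun n => sqrtS (sqrtS (g n))) Filter.atTop (nhds (sqrtS f)) :=
      (sqrtS.continuous.tendsto f).comp hglim
    simp only [hS'] at h2
    exact tendsto_nhds_unique h1 h2
  have huniq : ∀ c, c ∈ closure (Set.range ⇑C) → sqrtG c = C f → c = c₀ := by
    intro c hmem hGc
    have hd0 : sqrtG (c - c₀) = 0 := by rw [map_sub, hGc, hGc₀, sub_self]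
    have hCs0 : Cs (c - c₀) = 0 := by
      have := hCsnorm (c - c₀)
      rw [hd0, norm_zero, norm_eq_zero] at this
      exact this
    have horth : ∀ h : H, ⟪c - c₀, C h⟫ = 0 := by
      intro h
      rw [← ContinuousLinearMap.adjoint_inner_left C, ← hCsdef, hCs0, inner_zero_left]
    have hmemd : c - c₀ ∈ closure (Set.range ⇑C) := by
      have hset : closure (Set.range ⇑C) = ((LinearMap.range (C : H →ₗ[ℂ] lp (fun _ : ι => ℂ) 2)).topologicalClosure : Set _) := by
        rw [Submodule.topologicalClosure_coe, LinearMap.coe_range, ContinuousLinearMap.coe_coe]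
      rw [hset] at hmem hc₀mem ⊢
      rw [SetLike.mem_coe] at hmem hc₀mem ⊢
      exact sub_mem hmem hc₀mem
    obtain ⟨v, hv1, hv2⟩ := mem_closure_iff_seq_limit.mp hmemd
    have hz : ⟪c - c₀, c - c₀⟫ = 0 := by
      have hten : Filter.Tendsto (fun n => ⟪c - c₀, v n⟫) Filter.atTop
          (nhds ⟪c - c₀, c - c₀⟫) :=
        Filter.Tendsto.inner tendsto_const_nhds hv2
      have hzz : (fun n => ⟪c - c₀, v n⟫) = fun _ => (0 : ℂ) := by
        funext n
        obtain ⟨h, hh⟩ := hv1 n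
        rw [← hh]
        exact horth h
      rw [hzz] at hten
      exact (tendsto_nhds_unique hten tendsto_const_nhds)
    have := inner_self_eq_zero.mp hz
    exact sub_eq_zero.mp this
  refine ⟨⟨c₀, ⟨hc₀mem, hGc₀⟩, fun c hc => huniq c hc.1 hc.2⟩, ?_⟩
  intro c hmem hGc
  have hceq : c = c₀ := huniq c hmem hGc
  subst hceq
  refine ⟨?_, hCsc₀, ?_⟩
  · have h1 := lp.hasSum_single (E := fun _ : ι => ℂ) ENNReal.ofNat_ne_top c
    have h2 := h1.mapL Cs
    rw [hCsc₀] at h2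
    simpa only [hsingle] using h2
  · intro h hh
    rw [hCsc₀] at hh
    have hz : sqrtS (h - f) = 0 := by rw [map_sub, hh, sub_self]
    have := hSinj _ hz
    exact sub_eq_zero.mp this
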